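/- Let s ≥ 1 be a real number. There exists a constant C > 0 such that for all functions f1, f2, f3 : ℤ → [0,∞) with ⟨k⟩^s fj(k) square-summable, one has ( Σ_{k∈ℤ} ⟨k⟩^{2(s-2)} ( Σ_{k1-k2+k3=k} ⟨max(|k1|,|k2|,|k3|)⟩^2 f1(k1) f2(k2) f3(k3) )^2 )^{1/2} ≤ C · ∏_{j=1}^3 ‖⟨·⟩^s fj‖_{l^2}, where ⟨k⟩ = (1+k^2)^{1/2}. -/

import Mathlib

open scoped ENNReal NNReal

/-- The Japanese bracket `⟨k⟩ = (1+k^2)^{1/2}`. -/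
noncomputable def jb (k : ℤ) : ℝ := Real.sqrt (1 + (k : ℝ) ^ 2)

/-- The `l^2_s` norm `‖⟨·⟩^s f‖_{l^2}`, valued in `ℝ≥0∞`. -/
noncomputable def sobNorm (s : ℝ) (f : ℤ → ℝ≥0) : ℝ≥0∞ :=
  (∑' k : ℤ, ENNReal.ofReal (jb k ^ (2 * s)) * (f k : ℝ≥0∞) ^ 2) ^ ((1 : ℝ) / 2)

open Function MeasureTheory


-- Cauchy-Schwarz for ENNReal tsums on ℤ
lemma tsum_cs (u v : ℤ → ℝ≥0∞) :
    ∑' i, u i * v i ≤ (∑' i, (u i) ^ 2) ^ ((1:ℝ)/2) * (∑' i, (v i) ^ 2) ^ ((1:ℝ)/2) := by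
  have hpq : Real.HolderConjugate 2 2 := Real.HolderConjugate.two_two
  have hu : AEMeasurable u (Measure.count : Measure ℤ) :=
    (measurable_of_countable u).aemeasurable
  have hv : AEMeasurable v (Measure.count : Measure ℤ) :=
    (measurable_of_countable v).aemeasurable
  have h := ENNReal.lintegral_mul_le_Lp_mul_Lq (Measure.count : Measure ℤ) hpq hu hv
  simp only [Pi.mul_apply, lintegral_count] at h
  calc ∑' i, u i * v i ≤ (∑' i, u i ^ (2:ℝ)) ^ ((1:ℝ)/2) * (∑' i, v i ^ (2:ℝ)) ^ ((1:ℝ)/2) := by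
        simpa using h
    _ = (∑' i, (u i) ^ 2) ^ ((1:ℝ)/2) * (∑' i, (v i) ^ 2) ^ ((1:ℝ)/2) := by
        simp [ENNReal.rpow_two]

lemma sq_rpow_half (x : ℝ≥0∞) : (x ^ 2) ^ ((1:ℝ)/2) = x := by
  rw [← ENNReal.rpow_two, ← ENNReal.rpow_mul]
  norm_num

lemma rpow_half_sq (x : ℝ≥0∞) : ((x) ^ ((1:ℝ)/2)) ^ 2 = x := by
  rw [← ENNReal.rpow_two, ← ENNReal.rpow_mul]
  norm_num

-- weighted Cauchy-Schwarz
lemma wCS (w φ : ℤ → ℝ≥0∞) :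
    (∑' i, w i * φ i) ^ 2 ≤ (∑' i, w i) * ∑' i, w i * (φ i) ^ 2 := by
  have h : ∀ i, w i * φ i = (w i ^ ((1:ℝ)/2)) * ((w i * (φ i)^2) ^ ((1:ℝ)/2)) := by
    intro i
    rw [ENNReal.mul_rpow_of_nonneg _ _ (by norm_num : (0:ℝ) ≤ 1/2), sq_rpow_half,
      ← mul_assoc, ← ENNReal.rpow_add_of_nonneg _ _ (by norm_num) (by norm_num)]
    norm_num
  calc (∑' i, w i * φ i) ^ 2
      = (∑' i, (w i ^ ((1:ℝ)/2)) * ((w i * (φ i)^2) ^ ((1:ℝ)/2))) ^ 2 := by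
        simp_rw [← h]
    _ ≤ ((∑' i, (w i ^ ((1:ℝ)/2)) ^ 2) ^ ((1:ℝ)/2) * (∑' i, ((w i * (φ i)^2) ^ ((1:ℝ)/2)) ^ 2) ^ ((1:ℝ)/2)) ^ 2 := by
        gcongr
        exact tsum_cs _ _
    _ = (∑' i, w i) * ∑' i, w i * (φ i) ^ 2 := by
        simp_rw [rpow_half_sq]
        rw [mul_pow, rpow_half_sq, rpow_half_sq]

lemma CSinj (u v : ℤ → ℝ≥0∞) (e : ℤ → ℤ) (he : Injective e) :
    ∑' j, u j * v (e j) ≤ (∑' j, (u j) ^ 2) ^ ((1:ℝ)/2) * (∑' j, (v j) ^ 2) ^ ((1:ℝ)/2) := by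
  refine (tsum_cs u (fun j => v (e j))).trans ?_
  exact mul_le_mul' le_rfl (ENNReal.rpow_le_rpow
    (ENNReal.tsum_comp_le_tsum_of_injective he (fun x => (v x) ^ 2)) (by norm_num))


lemma keyA (w1 w2 φ : ℤ → ℝ≥0∞) (σ : ℤ → ℤ → ℤ → ℤ)
    (hσ : ∀ i j, Injective (fun k => σ k i j)) :
    (∑' k : ℤ, (∑' i : ℤ, ∑' j : ℤ, w1 i * (w2 j * φ (σ k i j))) ^ 2) ^ ((1:ℝ)/2)
      ≤ (∑' i, w1 i) * (∑' j, w2 j) * (∑' x, (φ x) ^ 2) ^ ((1:ℝ)/2) := by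
  set W1 := ∑' i, w1 i
  set W2 := ∑' j, w2 j
  have hstep : ∀ k, (∑' i : ℤ, ∑' j : ℤ, w1 i * (w2 j * φ (σ k i j))) ^ 2
      ≤ W1 * W2 * ∑' i : ℤ, ∑' j : ℤ, w1 i * (w2 j * (φ (σ k i j)) ^ 2) := by
    intro k
    have h1 : (∑' i : ℤ, ∑' j : ℤ, w1 i * (w2 j * φ (σ k i j))) ^ 2
        = (∑' i : ℤ, w1 i * (∑' j : ℤ, w2 j * φ (σ k i j))) ^ 2 := by
      congr 1; exact tsum_congr fun i => ENNReal.tsum_mul_left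
    rw [h1]
    calc (∑' i : ℤ, w1 i * (∑' j : ℤ, w2 j * φ (σ k i j))) ^ 2
        ≤ W1 * ∑' i : ℤ, w1 i * ((∑' j : ℤ, w2 j * φ (σ k i j))) ^ 2 :=
          wCS w1 _
      _ ≤ W1 * ∑' i : ℤ, w1 i * (W2 * ∑' j : ℤ, w2 j * (φ (σ k i j)) ^ 2) := by
          gcongr with i
          exact wCS w2 _
      _ = W1 * W2 * ∑' i : ℤ, ∑' j : ℤ, w1 i * (w2 j * (φ (σ k i j)) ^ 2) := by
          simp_rw [ENNReal.tsum_mul_left]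
          rw [mul_assoc]
          congr 1
          rw [← ENNReal.tsum_mul_left]
          exact tsum_congr fun i => by ring
  have h2 : (∑' k : ℤ, (∑' i : ℤ, ∑' j : ℤ, w1 i * (w2 j * φ (σ k i j))) ^ 2)
      ≤ W1 * W2 * (W1 * (W2 * ∑' x, (φ x) ^ 2)) := by
    calc ∑' k : ℤ, (∑' i : ℤ, ∑' j : ℤ, w1 i * (w2 j * φ (σ k i j))) ^ 2
        ≤ ∑' k : ℤ, W1 * W2 * ∑' i : ℤ, ∑' j : ℤ, w1 i * (w2 j * (φ (σ k i j)) ^ 2) :=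
          ENNReal.tsum_le_tsum hstep
      _ = W1 * W2 * ∑' k : ℤ, ∑' i : ℤ, ∑' j : ℤ, w1 i * (w2 j * (φ (σ k i j)) ^ 2) :=
          ENNReal.tsum_mul_left
      _ = W1 * W2 * ∑' i : ℤ, ∑' j : ℤ, ∑' k : ℤ, w1 i * (w2 j * (φ (σ k i j)) ^ 2) := by
          congr 1
          rw [ENNReal.tsum_comm]
          exact tsum_congr fun i => ENNReal.tsum_comm
      _ ≤ W1 * W2 * (W1 * (W2 * ∑' x, (φ x) ^ 2)) := by
          refine mul_le_mul' le_rfl ?_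
          calc ∑' i : ℤ, ∑' j : ℤ, ∑' k : ℤ, w1 i * (w2 j * (φ (σ k i j)) ^ 2)
              = ∑' i : ℤ, w1 i * ∑' j : ℤ, w2 j * ∑' k : ℤ, (φ (σ k i j)) ^ 2 := by
                simp_rw [ENNReal.tsum_mul_left]
            _ ≤ ∑' i : ℤ, w1 i * ∑' j : ℤ, w2 j * ∑' x : ℤ, (φ x) ^ 2 := by
                refine ENNReal.tsum_le_tsum fun i => mul_le_mul' le_rfl ?_
                refine ENNReal.tsum_le_tsum fun j => mul_le_mul' le_rfl ?_
                exact ENNReal.tsum_comp_le_tsum_of_injective (hσ i j) (fun x => (φ x) ^ 2)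
            _ = W1 * (W2 * ∑' x, (φ x) ^ 2) := by
                rw [ENNReal.tsum_mul_right, ENNReal.tsum_mul_right]
  calc (∑' k : ℤ, (∑' i : ℤ, ∑' j : ℤ, w1 i * (w2 j * φ (σ k i j))) ^ 2) ^ ((1:ℝ)/2)
      ≤ ((W1 * W2) ^ 2 * ∑' x, (φ x) ^ 2) ^ ((1:ℝ)/2) := by
        refine ENNReal.rpow_le_rpow ?_ (by norm_num)
        refine h2.trans (le_of_eq ?_)
        ring
    _ = W1 * W2 * (∑' x, (φ x) ^ 2) ^ ((1:ℝ)/2) := by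
        rw [ENNReal.mul_rpow_of_nonneg _ _ (by norm_num : (0:ℝ) ≤ 1/2), sq_rpow_half]

lemma keyB (w u v : ℤ → ℝ≥0∞) (e : ℤ → ℤ → ℤ) (he : ∀ i, Injective (e i)) :
    ∑' i : ℤ, w i * (∑' j : ℤ, u j * v (e i j))
      ≤ (∑' i, w i) * ((∑' j, (u j) ^ 2) ^ ((1:ℝ)/2) * (∑' j, (v j) ^ 2) ^ ((1:ℝ)/2)) := by
  calc ∑' i : ℤ, w i * (∑' j : ℤ, u j * v (e i j))
      ≤ ∑' i : ℤ, w i * ((∑' j, (u j) ^ 2) ^ ((1:ℝ)/2) * (∑' j, (v j) ^ 2) ^ ((1:ℝ)/2)) := by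
        gcongr with i
        exact CSinj u v (e i) (he i)
    _ = _ := ENNReal.tsum_mul_right

-- Minkowski for l2 tsum
lemma mink (u v : ℤ → ℝ≥0∞) :
    (∑' k, (u k + v k) ^ 2) ^ ((1:ℝ)/2)
      ≤ (∑' k, (u k) ^ 2) ^ ((1:ℝ)/2) + (∑' k, (v k) ^ 2) ^ ((1:ℝ)/2) := by
  have hu : AEMeasurable u (Measure.count : Measure ℤ) :=
    (measurable_of_countable u).aemeasurable
  have hv : AEMeasurable v (Measure.count : Measure ℤ) :=
    (measurable_of_countable v).aemeasurable
  have h := ENNReal.lintegral_Lp_add_le hu hv (by norm_num : (1:ℝ) ≤ 2)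
  simp only [Pi.add_apply, lintegral_count] at h
  calc (∑' k, (u k + v k) ^ 2) ^ ((1:ℝ)/2)
      = (∑' k, (u k + v k) ^ (2:ℝ)) ^ ((1:ℝ)/2) := by simp [ENNReal.rpow_two]
    _ ≤ (∑' k, (u k) ^ (2:ℝ)) ^ ((1:ℝ)/2) + (∑' k, (v k) ^ (2:ℝ)) ^ ((1:ℝ)/2) := h
    _ = (∑' k, (u k) ^ 2) ^ ((1:ℝ)/2) + (∑' k, (v k) ^ 2) ^ ((1:ℝ)/2) := by
        simp [ENNReal.rpow_two]


lemma one_le_jb (k : ℤ) : 1 ≤ jb k := by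
  calc (1:ℝ) = Real.sqrt 1 := by simp
    _ ≤ jb k := Real.sqrt_le_sqrt (by nlinarith [sq_nonneg ((k:ℝ))])

lemma jb_pos (k : ℤ) : 0 < jb k := lt_of_lt_of_le one_pos (one_le_jb k)

lemma jb_nonneg (k : ℤ) : 0 ≤ jb k := (jb_pos k).le

lemma jb_sq (k : ℤ) : jb k ^ 2 = 1 + (k:ℝ) ^ 2 := Real.sq_sqrt (by positivity)

lemma jb_neg (k : ℤ) : jb (-k) = jb k := by simp [jb]

lemma jb_abs (k : ℤ) : jb |k| = jb k := by
  rcases abs_choice k with h | h <;> rw [h]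
  exact jb_neg k

-- √(1+x²)√(1+y²) ≥ 1+xy  (x y real)
lemma aux_cross (x y : ℝ) :
    1 + x * y ≤ Real.sqrt (1 + x ^ 2) * Real.sqrt (1 + y ^ 2) := by
  rw [← Real.sqrt_mul (by positivity)]
  calc 1 + x*y ≤ |1 + x*y| := le_abs_self _
    _ = Real.sqrt ((1+x*y)^2) := (Real.sqrt_sq_eq_abs _).symm
    _ ≤ Real.sqrt ((1+x^2) * (1+y^2)) := Real.sqrt_le_sqrt (by nlinarith [sq_nonneg (x - y)])

lemma jb_add3 (a b c : ℤ) : jb (a + b + c) ≤ jb a + jb b + jb c := by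
  have h1 := aux_cross (a:ℝ) (b:ℝ)
  have h2 := aux_cross (a:ℝ) (c:ℝ)
  have h3 := aux_cross (b:ℝ) (c:ℝ)
  have hs : jb (a+b+c) = Real.sqrt (1 + ((a:ℝ)+b+c)^2) := by
    rw [jb]; push_cast; ring_nf
  rw [hs]
  have hr : 0 ≤ jb a + jb b + jb c := by
    have := jb_nonneg a; have := jb_nonneg b; have := jb_nonneg c; linarith
  rw [show jb a + jb b + jb c = Real.sqrt ((jb a + jb b + jb c)^2) by
    rw [Real.sqrt_sq hr]]
  apply Real.sqrt_le_sqrt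
  have ea := jb_sq a; have eb := jb_sq b; have ec := jb_sq c
  unfold jb at *
  nlinarith [h1, h2, h3]

-- jb k ≤ 3 * (jb a * jb b * jb c) whenever jb k ≤ jb a + jb b + jb c would do;
lemma sum_le_three_prod {a b c : ℝ} (ha : 1 ≤ a) (hb : 1 ≤ b) (hc : 1 ≤ c) :
    a + b + c ≤ 3 * (a * b * c) := by
  have hbc : 1 ≤ b * c := by nlinarith
  have hac : 1 ≤ a * c := by nlinarith
  have hab : 1 ≤ a * b := by nlinarith
  have e1 : a * 1 ≤ a * (b * c) := by nlinarith
  have e2 : b * 1 ≤ b * (a * c) := by nlinarith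
  have e3 : c * 1 ≤ c * (a * b) := by nlinarith
  nlinarith [e1, e2, e3]

-- the core real inequality
lemma core (s : ℝ) (hs : 1 ≤ s) {a ai aj al : ℝ}
    (ha : 1 ≤ a) (h1 : 1 ≤ ai) (h2 : 1 ≤ aj) (h3 : 1 ≤ al)
    (hi : ai ≤ a + aj + al) (hk : a ≤ 3 * (ai * aj * al)) :
    a ^ (s-2) * ai ^ (2:ℝ) ≤
      3 ^ (s-1) * (ai ^ s * aj ^ (s-1) * al ^ (s-1))
      + 3 ^ (s-1) * (a⁻¹ * (ai ^ s * aj ^ s * al ^ (s-1)))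
      + 3 ^ (s-1) * (a⁻¹ * (ai ^ s * aj ^ (s-1) * al ^ s)) := by
  have ha0 : (0:ℝ) < a := lt_of_lt_of_le one_pos ha
  have hi0 : (0:ℝ) < ai := lt_of_lt_of_le one_pos h1
  have hj0 : (0:ℝ) < aj := lt_of_lt_of_le one_pos h2
  have hl0 : (0:ℝ) < al := lt_of_lt_of_le one_pos h3
  have hs1 : (0:ℝ) ≤ s - 1 := by linarith
  -- a^(s-1) ≤ 3^(s-1) ai^(s-1) aj^(s-1) al^(s-1)
  have hkey : a ^ (s-1) ≤ 3 ^ (s-1) * (ai ^ (s-1) * (aj ^ (s-1) * al ^ (s-1))) := by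
    calc a ^ (s-1) ≤ (3 * (ai * aj * al)) ^ (s-1) :=
          Real.rpow_le_rpow ha0.le hk hs1
      _ = 3 ^ (s-1) * (ai ^ (s-1) * (aj ^ (s-1) * al ^ (s-1))) := by
          rw [Real.mul_rpow (by norm_num) (by positivity),
            Real.mul_rpow (by positivity) (by positivity),
            Real.mul_rpow (by positivity) (by positivity)]
          ring
  have hsplit : a ^ (s-2) * ai ^ (2:ℝ) ≤
      a ^ (s-2) * (ai * a) + a ^ (s-2) * (ai * aj) + a ^ (s-2) * (ai * al) := by
    have : ai ^ (2:ℝ) = ai * ai := by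
      rw [show (2:ℝ) = ((2:ℕ):ℝ) by norm_num, Real.rpow_natCast]; ring
    rw [this]
    have h4 : ai * ai ≤ ai * a + ai * aj + ai * al := by nlinarith
    have h5 : (0:ℝ) ≤ a ^ (s-2) := Real.rpow_nonneg ha0.le _
    nlinarith
  have hfact : ∀ x : ℝ, 0 < x → x ^ (s-1) * x = x ^ s := by
    intro x hx
    calc x ^ (s-1) * x = x ^ (s-1) * x ^ (1:ℝ) := by rw [Real.rpow_one]
      _ = x ^ ((s-1) + 1) := (Real.rpow_add hx _ _).symm
      _ = x ^ s := by ring_nf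
  have hainv : a ^ (s-2) = a⁻¹ * a ^ (s-1) := by
    calc a ^ (s-2) = a ^ ((-1) + (s-1)) := by ring_nf
      _ = a ^ (-1:ℝ) * a ^ (s-1) := Real.rpow_add ha0 _ _
      _ = a⁻¹ * a ^ (s-1) := by rw [Real.rpow_neg_one]
  -- term (i)
  have e1 : a ^ (s-2) * (ai * a) ≤ 3 ^ (s-1) * (ai ^ s * aj ^ (s-1) * al ^ (s-1)) := by
    have : a ^ (s-2) * (ai * a) = a ^ (s-1) * ai := by
      rw [hainv]
      field_simp
    rw [this]
    calc a ^ (s-1) * ai ≤ (3 ^ (s-1) * (ai ^ (s-1) * (aj ^ (s-1) * al ^ (s-1)))) * ai := by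
          have : (0:ℝ) ≤ ai := hi0.le
          nlinarith [hkey]
      _ = 3 ^ (s-1) * (ai ^ s * aj ^ (s-1) * al ^ (s-1)) := by
          rw [show 3 ^ (s-1) * (ai ^ (s-1) * (aj ^ (s-1) * al ^ (s-1))) * ai
              = 3 ^ (s-1) * ((ai ^ (s-1) * ai) * aj ^ (s-1) * al ^ (s-1)) by ring,
            hfact ai hi0]
  -- term (ii)
  have e2 : a ^ (s-2) * (ai * aj) ≤ 3 ^ (s-1) * (a⁻¹ * (ai ^ s * aj ^ s * al ^ (s-1))) := by
    rw [hainv]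
    have hstep : a ^ (s-1) * (ai * aj) ≤ 3 ^ (s-1) * (ai ^ s * aj ^ s * al ^ (s-1)) := by
      calc a ^ (s-1) * (ai * aj)
          ≤ (3 ^ (s-1) * (ai ^ (s-1) * (aj ^ (s-1) * al ^ (s-1)))) * (ai * aj) := by
            have h6 : (0:ℝ) < ai * aj := by positivity
            nlinarith [hkey]
        _ = 3 ^ (s-1) * ((ai ^ (s-1) * ai) * (aj ^ (s-1) * aj) * al ^ (s-1)) := by ring
        _ = 3 ^ (s-1) * (ai ^ s * aj ^ s * al ^ (s-1)) := by
            rw [hfact ai hi0, hfact aj hj0]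
    calc a⁻¹ * a ^ (s-1) * (ai * aj) = a⁻¹ * (a ^ (s-1) * (ai * aj)) := by ring
      _ ≤ a⁻¹ * (3 ^ (s-1) * (ai ^ s * aj ^ s * al ^ (s-1))) := by
          have : (0:ℝ) ≤ a⁻¹ := by positivity
          nlinarith [hstep]
      _ = 3 ^ (s-1) * (a⁻¹ * (ai ^ s * aj ^ s * al ^ (s-1))) := by ring
  -- term (iii)
  have e3 : a ^ (s-2) * (ai * al) ≤ 3 ^ (s-1) * (a⁻¹ * (ai ^ s * aj ^ (s-1) * al ^ s)) := by
    rw [hainv]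
    have hstep : a ^ (s-1) * (ai * al) ≤ 3 ^ (s-1) * (ai ^ s * aj ^ (s-1) * al ^ s) := by
      calc a ^ (s-1) * (ai * al)
          ≤ (3 ^ (s-1) * (ai ^ (s-1) * (aj ^ (s-1) * al ^ (s-1)))) * (ai * al) := by
            have h6 : (0:ℝ) < ai * al := by positivity
            nlinarith [hkey]
        _ = 3 ^ (s-1) * ((ai ^ (s-1) * ai) * aj ^ (s-1) * (al ^ (s-1) * al)) := by ring
        _ = 3 ^ (s-1) * (ai ^ s * aj ^ (s-1) * al ^ s) := by
            rw [hfact ai hi0, hfact al hl0]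
    calc a⁻¹ * a ^ (s-1) * (ai * al) = a⁻¹ * (a ^ (s-1) * (ai * al)) := by ring
      _ ≤ a⁻¹ * (3 ^ (s-1) * (ai ^ s * aj ^ (s-1) * al ^ s)) := by
          have : (0:ℝ) ≤ a⁻¹ := by positivity
          nlinarith [hstep]
      _ = 3 ^ (s-1) * (a⁻¹ * (ai ^ s * aj ^ (s-1) * al ^ s)) := by ring
  linarith [hsplit, e1, e2, e3]

lemma combine (s : ℝ) (hs : 1 ≤ s) {a a1 a2 a3 μ : ℝ}
    (ha : 1 ≤ a) (h1 : 1 ≤ a1) (h2 : 1 ≤ a2) (h3 : 1 ≤ a3)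
    (hμ : μ = a1 ∨ μ = a2 ∨ μ = a3)
    (e1 : a1 ≤ a + a2 + a3) (e2 : a2 ≤ a + a1 + a3) (e3 : a3 ≤ a + a1 + a2)
    (hk : a ≤ 3 * (a1 * a2 * a3)) :
    a ^ (s-2) * μ ^ (2:ℝ) ≤
      3 ^ (s-1) * (a1 ^ s * a2 ^ (s-1) * a3 ^ (s-1)
        + a1 ^ (s-1) * a2 ^ s * a3 ^ (s-1)
        + a1 ^ (s-1) * a2 ^ (s-1) * a3 ^ s
        + a⁻¹ * (a1 ^ s * a2 ^ s * a3 ^ (s-1))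
        + a⁻¹ * (a1 ^ s * a2 ^ (s-1) * a3 ^ s)
        + a⁻¹ * (a1 ^ (s-1) * a2 ^ s * a3 ^ s)) := by
  have ha0 : (0:ℝ) < a := lt_of_lt_of_le one_pos ha
  have h10 : (0:ℝ) < a1 := lt_of_lt_of_le one_pos h1
  have h20 : (0:ℝ) < a2 := lt_of_lt_of_le one_pos h2
  have h30 : (0:ℝ) < a3 := lt_of_lt_of_le one_pos h3
  have hp : (0:ℝ) < 3 ^ (s-1) := Real.rpow_pos_of_pos (by norm_num) _
  have n1 : (0:ℝ) ≤ a1 ^ s * a2 ^ (s-1) * a3 ^ (s-1) := by positivity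
  have n2 : (0:ℝ) ≤ a1 ^ (s-1) * a2 ^ s * a3 ^ (s-1) := by positivity
  have n3 : (0:ℝ) ≤ a1 ^ (s-1) * a2 ^ (s-1) * a3 ^ s := by positivity
  have n4 : (0:ℝ) ≤ a⁻¹ * (a1 ^ s * a2 ^ s * a3 ^ (s-1)) := by positivity
  have n5 : (0:ℝ) ≤ a⁻¹ * (a1 ^ s * a2 ^ (s-1) * a3 ^ s) := by positivity
  have n6 : (0:ℝ) ≤ a⁻¹ * (a1 ^ (s-1) * a2 ^ s * a3 ^ s) := by positivity
  rcases hμ with h | h | h <;> rw [h]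
  · have := core s hs ha h1 h2 h3 e1 hk
    nlinarith [this]
  · have hk' : a ≤ 3 * (a2 * a1 * a3) := by nlinarith [hk]
    have := core s hs ha h2 h1 h3 e2 hk'
    nlinarith [this]
  · have hk' : a ≤ 3 * (a3 * a1 * a2) := by nlinarith [hk]
    have := core s hs ha h3 h1 h2 e3 hk'
    nlinarith [this]

lemma pointwise_real (s : ℝ) (hs : 1 ≤ s) (k p1 p2 : ℤ) :
    jb k ^ (s-2) * jb (max (max |p1| |p2|) |k - p1 + p2|) ^ (2:ℝ) ≤
      3 ^ (s-1) * (jb p1 ^ s * jb p2 ^ (s-1) * jb (k-p1+p2) ^ (s-1)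
        + jb p1 ^ (s-1) * jb p2 ^ s * jb (k-p1+p2) ^ (s-1)
        + jb p1 ^ (s-1) * jb p2 ^ (s-1) * jb (k-p1+p2) ^ s
        + (jb k)⁻¹ * (jb p1 ^ s * jb p2 ^ s * jb (k-p1+p2) ^ (s-1))
        + (jb k)⁻¹ * (jb p1 ^ s * jb p2 ^ (s-1) * jb (k-p1+p2) ^ s)
        + (jb k)⁻¹ * (jb p1 ^ (s-1) * jb p2 ^ s * jb (k-p1+p2) ^ s)) := by
  set k3 := k - p1 + p2 with hk3
  have hμ : jb (max (max |p1| |p2|) |k3|) = jb p1 ∨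
      jb (max (max |p1| |p2|) |k3|) = jb p2 ∨ jb (max (max |p1| |p2|) |k3|) = jb k3 := by
    rcases max_choice (max |p1| |p2|) |k3| with h | h <;> rw [h]
    · rcases max_choice |p1| |p2| with h' | h' <;> rw [h']
      · exact Or.inl (jb_abs p1)
      · exact Or.inr (Or.inl (jb_abs p2))
    · exact Or.inr (Or.inr (jb_abs k3))
  have e1 : jb p1 ≤ jb k + jb p2 + jb k3 := by
    have : p1 = k + p2 + (-(k3)) := by omega
    calc jb p1 = jb (k + p2 + (-(k3))) := by rw [← this]
      _ ≤ jb k + jb p2 + jb (-(k3)) := jb_add3 _ _ _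
      _ = jb k + jb p2 + jb k3 := by rw [jb_neg]
  have e2 : jb p2 ≤ jb k + jb p1 + jb k3 := by
    have : p2 = (-k) + p1 + k3 := by omega
    calc jb p2 = jb ((-k) + p1 + k3) := by rw [← this]
      _ ≤ jb (-k) + jb p1 + jb k3 := jb_add3 _ _ _
      _ = jb k + jb p1 + jb k3 := by rw [jb_neg]
  have e3 : jb k3 ≤ jb k + jb p1 + jb p2 := by
    have : k3 = k + (-p1) + p2 := by omega
    calc jb k3 = jb (k + (-p1) + p2) := by rw [← this]
      _ ≤ jb k + jb (-p1) + jb p2 := jb_add3 _ _ _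
      _ = jb k + jb p1 + jb p2 := by rw [jb_neg]
  have hk' : jb k ≤ 3 * (jb p1 * jb p2 * jb k3) := by
    have hh : k = p1 + (-p2) + k3 := by omega
    calc jb k = jb (p1 + (-p2) + k3) := by rw [← hh]
      _ ≤ jb p1 + jb (-p2) + jb k3 := jb_add3 _ _ _
      _ = jb p1 + jb p2 + jb k3 := by rw [jb_neg]
      _ ≤ 3 * (jb p1 * jb p2 * jb k3) :=
          sum_le_three_prod (one_le_jb p1) (one_le_jb p2) (one_le_jb k3)
  exact combine s hs (one_le_jb k) (one_le_jb p1) (one_le_jb p2) (one_le_jb k3) hμ e1 e2 e3 hk'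

noncomputable def gw (s : ℝ) (f : ℤ → ℝ≥0) (x : ℤ) : ℝ≥0∞ :=
  ENNReal.ofReal (jb x ^ s) * (f x : ℝ≥0∞)
noncomputable def hw (s : ℝ) (f : ℤ → ℝ≥0) (x : ℤ) : ℝ≥0∞ :=
  ENNReal.ofReal (jb x ^ (s-1)) * (f x : ℝ≥0∞)
noncomputable def jbinvE (k : ℤ) : ℝ≥0∞ := ENNReal.ofReal (jb k)⁻¹

lemma sob_eq (s : ℝ) (f : ℤ → ℝ≥0) :
    sobNorm s f = (∑' k, (gw s f k) ^ 2) ^ ((1:ℝ)/2) := by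
  unfold sobNorm gw
  congr 1
  refine tsum_congr fun k => ?_
  rw [mul_pow, ← ENNReal.ofReal_pow (Real.rpow_nonneg (jb_nonneg k) _)]
  congr 2
  rw [← Real.rpow_natCast (jb k ^ s) 2, ← Real.rpow_mul (jb_nonneg k)]
  norm_num
  ring_nf

noncomputable def realA : ℝ := ∑' k : ℤ, (1 + (k:ℝ)^2)⁻¹

lemma sA : Summable (fun k : ℤ => (1 + (k:ℝ)^2)⁻¹) := by
  have base : Summable (fun n : ℕ => 1/(n:ℝ)^2) := Real.summable_one_div_nat_pow.mpr one_lt_two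
  have shifted : Summable (fun n : ℕ => 1/((n:ℝ)+1)^2) := by
    have := (summable_nat_add_iff 1).mpr base
    simpa using this
  have hn : Summable (fun n : ℕ => (1 + ((n:ℤ):ℝ)^2)⁻¹) := by
    refine Summable.of_nonneg_of_le (fun n => by positivity) (fun n => ?_) (shifted.mul_left 2)
    have h2 : (0:ℝ) < ((n:ℝ)+1)^2 := by positivity
    have h3 : (0:ℝ) < 1 + (n:ℝ)^2 := by positivity
    have hd : (1:ℝ)/(1+(n:ℝ)^2) ≤ 2/(((n:ℝ))+1)^2 := by
      rw [div_le_div_iff₀ h3 h2]; nlinarith [sq_nonneg ((n:ℝ) - 1)]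
    calc (1 + ((n:ℤ):ℝ)^2)⁻¹ = 1/(1+(n:ℝ)^2) := by push_cast; rw [one_div]
      _ ≤ 2/((n:ℝ)+1)^2 := hd
      _ = 2 * (1/((n:ℝ)+1)^2) := by ring
  exact Summable.of_nat_of_neg hn (by simpa using hn)

lemma A_fin : ∑' k : ℤ, (jbinvE k) ^ 2 = ENNReal.ofReal realA := by
  have h : ∀ k : ℤ, (jbinvE k) ^ 2 = ENNReal.ofReal ((1 + (k:ℝ)^2)⁻¹) := by
    intro k
    rw [jbinvE, ← ENNReal.ofReal_pow (inv_nonneg.mpr (jb_nonneg k))]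
    congr 1
    rw [inv_pow, jb_sq]
  simp_rw [h]
  rw [realA, ENNReal.ofReal_tsum_of_nonneg (fun k => by positivity) sA]

lemma hw_l1 (s : ℝ) (f : ℤ → ℝ≥0) :
    ∑' x, hw s f x ≤ ENNReal.ofReal realA ^ ((1:ℝ)/2) * (∑' k, (gw s f k) ^ 2) ^ ((1:ℝ)/2) := by
  have h : ∀ x, hw s f x = jbinvE x * gw s f x := by
    intro x
    rw [hw, gw, jbinvE, ← mul_assoc, ← ENNReal.ofReal_mul (inv_nonneg.mpr (jb_nonneg x))]
    congr 2
    rw [← Real.rpow_neg_one (jb x), ← Real.rpow_add (jb_pos x)]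
    congr 1
    ring
  simp_rw [h]
  calc ∑' x, jbinvE x * gw s f x
      ≤ (∑' x, (jbinvE x)^2) ^ ((1:ℝ)/2) * (∑' x, (gw s f x)^2) ^ ((1:ℝ)/2) := tsum_cs _ _
    _ = _ := by rw [A_fin]


lemma expand3 {x1 x2 x3 : ℝ} (h1 : 0 ≤ x1) (h2 : 0 ≤ x2) (h3 : 0 ≤ x3)
    (u1 u2 u3 : ℝ≥0∞) :
    ENNReal.ofReal (x1 * x2 * x3) * (u1 * u2 * u3)
      = (ENNReal.ofReal x1 * u1) * (ENNReal.ofReal x2 * u2) * (ENNReal.ofReal x3 * u3) := by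
  rw [ENNReal.ofReal_mul (mul_nonneg h1 h2), ENNReal.ofReal_mul h1]
  ring

lemma pt (s : ℝ) (hs : 1 ≤ s) (f1 f2 f3 : ℤ → ℝ≥0) (k p1 p2 : ℤ) :
    ENNReal.ofReal (jb k ^ (s-2)) *
      (ENNReal.ofReal (jb (max (max |p1| |p2|) |k - p1 + p2|) ^ (2:ℝ)) *
        (f1 p1 : ℝ≥0∞) * (f2 p2 : ℝ≥0∞) * (f3 (k-p1+p2) : ℝ≥0∞))
    ≤ ENNReal.ofReal (3 ^ (s-1)) *
      (gw s f1 p1 * hw s f2 p2 * hw s f3 (k-p1+p2)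
       + hw s f1 p1 * gw s f2 p2 * hw s f3 (k-p1+p2)
       + hw s f1 p1 * hw s f2 p2 * gw s f3 (k-p1+p2)
       + jbinvE k * (gw s f1 p1 * gw s f2 p2 * hw s f3 (k-p1+p2))
       + jbinvE k * (gw s f1 p1 * hw s f2 p2 * gw s f3 (k-p1+p2))
       + jbinvE k * (hw s f1 p1 * gw s f2 p2 * gw s f3 (k-p1+p2))) := by
  set k3 := k - p1 + p2 with hk3
  have r0 : ∀ (i : ℤ) (t : ℝ), 0 ≤ jb i ^ t := fun i t => Real.rpow_nonneg (jb_nonneg i) t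
  have rinv : (0:ℝ) ≤ (jb k)⁻¹ := inv_nonneg.mpr (jb_nonneg k)
  set F : ℝ≥0∞ := (f1 p1 : ℝ≥0∞) * (f2 p2 : ℝ≥0∞) * (f3 k3 : ℝ≥0∞) with hF
  have lhs_eq : ENNReal.ofReal (jb k ^ (s-2)) *
      (ENNReal.ofReal (jb (max (max |p1| |p2|) |k3|) ^ (2:ℝ)) *
        (f1 p1 : ℝ≥0∞) * (f2 p2 : ℝ≥0∞) * (f3 k3 : ℝ≥0∞))
      = ENNReal.ofReal (jb k ^ (s-2) * jb (max (max |p1| |p2|) |k3|) ^ (2:ℝ)) * F := by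
    rw [ENNReal.ofReal_mul (r0 k (s-2)), hF]
    ring
  rw [lhs_eq]
  refine le_trans (mul_le_mul_left
    (ENNReal.ofReal_le_ofReal (pointwise_real s hs k p1 p2)) F) (le_of_eq ?_)
  have hT : ∀ x y : ℝ, 0 ≤ x → 0 ≤ y → ENNReal.ofReal (x + y) =
      ENNReal.ofReal x + ENNReal.ofReal y := fun x y hx hy => ENNReal.ofReal_add hx hy
  have n1 : (0:ℝ) ≤ jb p1 ^ s * jb p2 ^ (s-1) * jb k3 ^ (s-1) := by
    have := r0 p1 s; have := r0 p2 (s-1); have := r0 k3 (s-1); positivity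
  have n2 : (0:ℝ) ≤ jb p1 ^ (s-1) * jb p2 ^ s * jb k3 ^ (s-1) := by
    have := r0 p1 (s-1); have := r0 p2 s; have := r0 k3 (s-1); positivity
  have n3 : (0:ℝ) ≤ jb p1 ^ (s-1) * jb p2 ^ (s-1) * jb k3 ^ s := by
    have := r0 p1 (s-1); have := r0 p2 (s-1); have := r0 k3 s; positivity
  have n4 : (0:ℝ) ≤ (jb k)⁻¹ * (jb p1 ^ s * jb p2 ^ s * jb k3 ^ (s-1)) := by
    have := r0 p1 s; have := r0 p2 s; have := r0 k3 (s-1); positivity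
  have n5 : (0:ℝ) ≤ (jb k)⁻¹ * (jb p1 ^ s * jb p2 ^ (s-1) * jb k3 ^ s) := by
    have := r0 p1 s; have := r0 p2 (s-1); have := r0 k3 s; positivity
  have n6 : (0:ℝ) ≤ (jb k)⁻¹ * (jb p1 ^ (s-1) * jb p2 ^ s * jb k3 ^ s) := by
    have := r0 p1 (s-1); have := r0 p2 s; have := r0 k3 s; positivity
  rw [ENNReal.ofReal_mul (by positivity : (0:ℝ) ≤ (3:ℝ) ^ (s-1))]
  rw [hT _ _ (by linarith [n1,n2,n3,n4,n5] : (0:ℝ) ≤ _) n6,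
      hT _ _ (by linarith [n1,n2,n3,n4] : (0:ℝ) ≤ _) n5,
      hT _ _ (by linarith [n1,n2,n3] : (0:ℝ) ≤ _) n4,
      hT _ _ (by linarith [n1,n2] : (0:ℝ) ≤ _) n3,
      hT _ _ n1 n2]
  rw [mul_assoc]
  congr 1
  rw [add_mul, add_mul, add_mul, add_mul, add_mul]
  have E1 : ENNReal.ofReal (jb p1 ^ s * jb p2 ^ (s-1) * jb k3 ^ (s-1)) * F
      = gw s f1 p1 * hw s f2 p2 * hw s f3 k3 := by
    rw [hF, expand3 (r0 p1 s) (r0 p2 (s-1)) (r0 k3 (s-1))]; rfl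
  have E2 : ENNReal.ofReal (jb p1 ^ (s-1) * jb p2 ^ s * jb k3 ^ (s-1)) * F
      = hw s f1 p1 * gw s f2 p2 * hw s f3 k3 := by
    rw [hF, expand3 (r0 p1 (s-1)) (r0 p2 s) (r0 k3 (s-1))]; rfl
  have E3 : ENNReal.ofReal (jb p1 ^ (s-1) * jb p2 ^ (s-1) * jb k3 ^ s) * F
      = hw s f1 p1 * hw s f2 p2 * gw s f3 k3 := by
    rw [hF, expand3 (r0 p1 (s-1)) (r0 p2 (s-1)) (r0 k3 s)]; rfl
  have E4 : ENNReal.ofReal ((jb k)⁻¹ * (jb p1 ^ s * jb p2 ^ s * jb k3 ^ (s-1))) * F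
      = jbinvE k * (gw s f1 p1 * gw s f2 p2 * hw s f3 k3) := by
    rw [ENNReal.ofReal_mul rinv, hF, mul_assoc,
      expand3 (r0 p1 s) (r0 p2 s) (r0 k3 (s-1))]; rfl
  have E5 : ENNReal.ofReal ((jb k)⁻¹ * (jb p1 ^ s * jb p2 ^ (s-1) * jb k3 ^ s)) * F
      = jbinvE k * (gw s f1 p1 * hw s f2 p2 * gw s f3 k3) := by
    rw [ENNReal.ofReal_mul rinv, hF, mul_assoc,
      expand3 (r0 p1 s) (r0 p2 (s-1)) (r0 k3 s)]; rfl
  have E6 : ENNReal.ofReal ((jb k)⁻¹ * (jb p1 ^ (s-1) * jb p2 ^ s * jb k3 ^ s)) * F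
      = jbinvE k * (hw s f1 p1 * gw s f2 p2 * gw s f3 k3) := by
    rw [ENNReal.ofReal_mul rinv, hF, mul_assoc,
      expand3 (r0 p1 (s-1)) (r0 p2 s) (r0 k3 s)]; rfl
  rw [E1, E2, E3, E4, E5, E6]


@[simps] def eA1 (k : ℤ) : ℤ × ℤ ≃ ℤ × ℤ where
  toFun p := (p.2, k - p.1 + p.2)
  invFun q := (k + q.1 - q.2, q.1)
  left_inv p := by obtain ⟨x, y⟩ := p; simp [Prod.ext_iff]; try omega
  right_inv q := by obtain ⟨x, y⟩ := q; simp [Prod.ext_iff]; try omega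

@[simps] def eA2 (k : ℤ) : ℤ × ℤ ≃ ℤ × ℤ where
  toFun p := (p.1, k - p.1 + p.2)
  invFun q := (q.1, q.1 + q.2 - k)
  left_inv p := by obtain ⟨x, y⟩ := p; simp [Prod.ext_iff]; try omega
  right_inv q := by obtain ⟨x, y⟩ := q; simp [Prod.ext_iff]; try omega

@[simps] def eB3 (k : ℤ) : ℤ × ℤ ≃ ℤ × ℤ where
  toFun p := (k - p.1 + p.2, p.1)
  invFun q := (q.2, q.1 - k + q.2)
  left_inv p := by obtain ⟨x, y⟩ := p; simp [Prod.ext_iff]; try omega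
  right_inv q := by obtain ⟨x, y⟩ := q; simp [Prod.ext_iff]; try omega

lemma patA3 (a b φ : ℤ → ℝ≥0∞) :
    (∑' k : ℤ, (∑' p : ℤ × ℤ, a p.1 * b p.2 * φ (k - p.1 + p.2)) ^ 2) ^ ((1:ℝ)/2)
      ≤ (∑' i, a i) * (∑' j, b j) * (∑' x, (φ x) ^ 2) ^ ((1:ℝ)/2) := by
  have hk : ∀ k : ℤ, (∑' p : ℤ × ℤ, a p.1 * b p.2 * φ (k - p.1 + p.2))
      = ∑' i : ℤ, ∑' j : ℤ, a i * (b j * φ (k - i + j)) := by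
    intro k
    rw [ENNReal.tsum_prod']
    exact tsum_congr fun i => tsum_congr fun j => by ring
  simp_rw [hk]
  exact keyA a b φ (fun k i j => k - i + j) (fun i j x y h => by simp only at h; omega)

lemma patA1 (φ a b : ℤ → ℝ≥0∞) :
    (∑' k : ℤ, (∑' p : ℤ × ℤ, φ p.1 * a p.2 * b (k - p.1 + p.2)) ^ 2) ^ ((1:ℝ)/2)
      ≤ (∑' i, a i) * (∑' j, b j) * (∑' x, (φ x) ^ 2) ^ ((1:ℝ)/2) := by
  have hk : ∀ k : ℤ, (∑' p : ℤ × ℤ, φ p.1 * a p.2 * b (k - p.1 + p.2))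
      = ∑' i : ℤ, ∑' j : ℤ, a i * (b j * φ (k + i - j)) := by
    intro k
    calc (∑' p : ℤ × ℤ, φ p.1 * a p.2 * b (k - p.1 + p.2))
        = ∑' p : ℤ × ℤ, a (eA1 k p).1 * (b (eA1 k p).2 * φ (k + (eA1 k p).1 - (eA1 k p).2)) := by
          refine tsum_congr fun p => ?_
          simp only [eA1_apply]
          rw [show k + p.2 - (k - p.1 + p.2) = p.1 by ring]
          ring
      _ = ∑' q : ℤ × ℤ, a q.1 * (b q.2 * φ (k + q.1 - q.2)) :=
          (eA1 k).tsum_eq (fun q => a q.1 * (b q.2 * φ (k + q.1 - q.2)))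
      _ = ∑' i : ℤ, ∑' j : ℤ, a i * (b j * φ (k + i - j)) := by rw [ENNReal.tsum_prod']
  simp_rw [hk]
  exact keyA a b φ (fun k i j => k + i - j) (fun i j x y h => by simp only at h; omega)

lemma patA2 (a φ b : ℤ → ℝ≥0∞) :
    (∑' k : ℤ, (∑' p : ℤ × ℤ, a p.1 * φ p.2 * b (k - p.1 + p.2)) ^ 2) ^ ((1:ℝ)/2)
      ≤ (∑' i, a i) * (∑' j, b j) * (∑' x, (φ x) ^ 2) ^ ((1:ℝ)/2) := by
  have hk : ∀ k : ℤ, (∑' p : ℤ × ℤ, a p.1 * φ p.2 * b (k - p.1 + p.2))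
      = ∑' i : ℤ, ∑' j : ℤ, a i * (b j * φ (i + j - k)) := by
    intro k
    calc (∑' p : ℤ × ℤ, a p.1 * φ p.2 * b (k - p.1 + p.2))
        = ∑' p : ℤ × ℤ, a (eA2 k p).1 * (b (eA2 k p).2 * φ ((eA2 k p).1 + (eA2 k p).2 - k)) := by
          refine tsum_congr fun p => ?_
          simp only [eA2_apply]
          rw [show p.1 + (k - p.1 + p.2) - k = p.2 by ring]
          ring
      _ = ∑' q : ℤ × ℤ, a q.1 * (b q.2 * φ (q.1 + q.2 - k)) :=
          (eA2 k).tsum_eq (fun q => a q.1 * (b q.2 * φ (q.1 + q.2 - k)))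
      _ = ∑' i : ℤ, ∑' j : ℤ, a i * (b j * φ (i + j - k)) := by rw [ENNReal.tsum_prod']
  simp_rw [hk]
  exact keyA a b φ (fun k i j => i + j - k) (fun i j x y h => by simp only at h; omega)

lemma patB1 (a u v : ℤ → ℝ≥0∞) (k : ℤ) :
    (∑' p : ℤ × ℤ, a p.1 * u p.2 * v (k - p.1 + p.2))
      ≤ (∑' i, a i) * ((∑' j, (u j) ^ 2) ^ ((1:ℝ)/2) * (∑' j, (v j) ^ 2) ^ ((1:ℝ)/2)) := by
  have hk : (∑' p : ℤ × ℤ, a p.1 * u p.2 * v (k - p.1 + p.2))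
      = ∑' i : ℤ, a i * (∑' j : ℤ, u j * v (k - i + j)) := by
    rw [ENNReal.tsum_prod']
    refine tsum_congr fun i => ?_
    rw [← ENNReal.tsum_mul_left]
    exact tsum_congr fun j => by ring
  rw [hk]
  exact keyB a u v (fun i j => k - i + j) (fun i x y h => by simp only at h; omega)

lemma patB2 (u a v : ℤ → ℝ≥0∞) (k : ℤ) :
    (∑' p : ℤ × ℤ, u p.1 * a p.2 * v (k - p.1 + p.2))
      ≤ (∑' i, a i) * ((∑' j, (u j) ^ 2) ^ ((1:ℝ)/2) * (∑' j, (v j) ^ 2) ^ ((1:ℝ)/2)) := by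
  have hk : (∑' p : ℤ × ℤ, u p.1 * a p.2 * v (k - p.1 + p.2))
      = ∑' i : ℤ, a i * (∑' j : ℤ, u j * v (k - j + i)) := by
    rw [ENNReal.tsum_prod', ENNReal.tsum_comm]
    refine tsum_congr fun i => ?_
    rw [← ENNReal.tsum_mul_left]
    exact tsum_congr fun j => by ring
  rw [hk]
  exact keyB a u v (fun i j => k - j + i) (fun i x y h => by simp only at h; omega)

lemma patB3 (u v a : ℤ → ℝ≥0∞) (k : ℤ) :
    (∑' p : ℤ × ℤ, u p.1 * v p.2 * a (k - p.1 + p.2))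
      ≤ (∑' i, a i) * ((∑' j, (u j) ^ 2) ^ ((1:ℝ)/2) * (∑' j, (v j) ^ 2) ^ ((1:ℝ)/2)) := by
  have hk : (∑' p : ℤ × ℤ, u p.1 * v p.2 * a (k - p.1 + p.2))
      = ∑' i : ℤ, a i * (∑' j : ℤ, u j * v (i - k + j)) := by
    calc (∑' p : ℤ × ℤ, u p.1 * v p.2 * a (k - p.1 + p.2))
        = ∑' p : ℤ × ℤ, a (eB3 k p).1 * (u (eB3 k p).2 * v ((eB3 k p).1 - k + (eB3 k p).2)) := by
          refine tsum_congr fun p => ?_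
          simp only [eB3_apply]
          rw [show (k - p.1 + p.2) - k + p.1 = p.2 by ring]
          ring
      _ = ∑' q : ℤ × ℤ, a q.1 * (u q.2 * v (q.1 - k + q.2)) :=
          (eB3 k).tsum_eq (fun q => a q.1 * (u q.2 * v (q.1 - k + q.2)))
      _ = ∑' i : ℤ, ∑' j : ℤ, a i * (u j * v (i - k + j)) := by rw [ENNReal.tsum_prod']
      _ = ∑' i : ℤ, a i * (∑' j : ℤ, u j * v (i - k + j)) :=
          tsum_congr fun i => ENNReal.tsum_mul_left
  rw [hk]
  exact keyB a u v (fun i j => i - k + j) (fun i x y h => by simp only at h; omega)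

lemma l2mono {u v : ℤ → ℝ≥0∞} (h : ∀ k, u k ≤ v k) :
    (∑' k, (u k) ^ 2) ^ ((1:ℝ)/2) ≤ (∑' k, (v k) ^ 2) ^ ((1:ℝ)/2) := by
  refine ENNReal.rpow_le_rpow (ENNReal.tsum_le_tsum fun k => ?_) (by norm_num)
  exact pow_le_pow_left' (h k) 2

lemma l2scale (c : ℝ≥0∞) (u : ℤ → ℝ≥0∞) :
    (∑' k, (c * u k) ^ 2) ^ ((1:ℝ)/2) = c * (∑' k, (u k) ^ 2) ^ ((1:ℝ)/2) := by
  simp_rw [mul_pow]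
  rw [ENNReal.tsum_mul_left, ENNReal.mul_rpow_of_nonneg _ _ (by norm_num : (0:ℝ) ≤ 1/2),
    sq_rpow_half]

lemma l2scale_right (u : ℤ → ℝ≥0∞) (c : ℝ≥0∞) :
    (∑' k, (u k * c) ^ 2) ^ ((1:ℝ)/2) = (∑' k, (u k) ^ 2) ^ ((1:ℝ)/2) * c := by
  simp_rw [mul_pow]
  rw [ENNReal.tsum_mul_right, ENNReal.mul_rpow_of_nonneg _ _ (by norm_num : (0:ℝ) ≤ 1/2),
    sq_rpow_half]

lemma mink6 (u1 u2 u3 u4 u5 u6 : ℤ → ℝ≥0∞) :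
    (∑' k, (u1 k + u2 k + u3 k + u4 k + u5 k + u6 k) ^ 2) ^ ((1:ℝ)/2)
      ≤ (∑' k, (u1 k) ^ 2) ^ ((1:ℝ)/2) + (∑' k, (u2 k) ^ 2) ^ ((1:ℝ)/2)
        + (∑' k, (u3 k) ^ 2) ^ ((1:ℝ)/2) + (∑' k, (u4 k) ^ 2) ^ ((1:ℝ)/2)
        + (∑' k, (u5 k) ^ 2) ^ ((1:ℝ)/2) + (∑' k, (u6 k) ^ 2) ^ ((1:ℝ)/2) := by
  calc (∑' k, (u1 k + u2 k + u3 k + u4 k + u5 k + u6 k) ^ 2) ^ ((1:ℝ)/2)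
      ≤ (∑' k, (u1 k + u2 k + u3 k + u4 k + u5 k) ^ 2) ^ ((1:ℝ)/2)
        + (∑' k, (u6 k) ^ 2) ^ ((1:ℝ)/2) := mink _ _
    _ ≤ ((∑' k, (u1 k + u2 k + u3 k + u4 k) ^ 2) ^ ((1:ℝ)/2)
        + (∑' k, (u5 k) ^ 2) ^ ((1:ℝ)/2)) + (∑' k, (u6 k) ^ 2) ^ ((1:ℝ)/2) := by
          gcongr
          exact mink _ _
    _ ≤ (((∑' k, (u1 k + u2 k + u3 k) ^ 2) ^ ((1:ℝ)/2)
        + (∑' k, (u4 k) ^ 2) ^ ((1:ℝ)/2)) + (∑' k, (u5 k) ^ 2) ^ ((1:ℝ)/2))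
        + (∑' k, (u6 k) ^ 2) ^ ((1:ℝ)/2) := by
          gcongr
          exact mink _ _
    _ ≤ ((((∑' k, (u1 k + u2 k) ^ 2) ^ ((1:ℝ)/2)
        + (∑' k, (u3 k) ^ 2) ^ ((1:ℝ)/2)) + (∑' k, (u4 k) ^ 2) ^ ((1:ℝ)/2))
        + (∑' k, (u5 k) ^ 2) ^ ((1:ℝ)/2)) + (∑' k, (u6 k) ^ 2) ^ ((1:ℝ)/2) := by
          gcongr
          exact mink _ _
    _ ≤ _ := by
          gcongr
          exact mink _ _

theorem stmt_14 (s : ℝ) (hs : 1 ≤ s) :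
    ∃ C : ℝ, 0 < C ∧ ∀ f1 f2 f3 : ℤ → ℝ≥0,
      sobNorm s f1 ≠ ⊤ → sobNorm s f2 ≠ ⊤ → sobNorm s f3 ≠ ⊤ →
      (∑' k : ℤ, ENNReal.ofReal (jb k ^ (2 * (s - 2))) *
          (∑' p : ℤ × ℤ,
              ENNReal.ofReal (jb (max (max |p.1| |p.2|) |k - p.1 + p.2|) ^ (2 : ℝ)) *
                (f1 p.1 : ℝ≥0∞) * (f2 p.2 : ℝ≥0∞) * (f3 (k - p.1 + p.2) : ℝ≥0∞)) ^ 2) ^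
            ((1 : ℝ) / 2)
        ≤ ENNReal.ofReal C * (sobNorm s f1 * sobNorm s f2 * sobNorm s f3) := by
  have hA0 : 0 < realA := by
    refine Summable.tsum_pos sA (fun k => by positivity) 0 (by norm_num)
  refine ⟨3 ^ (s-1) * 6 * realA, by positivity, ?_⟩
  intro f1 f2 f3 _ _ _
  set N1 := (∑' k, (gw s f1 k) ^ 2) ^ ((1:ℝ)/2) with hN1
  set N2 := (∑' k, (gw s f2 k) ^ 2) ^ ((1:ℝ)/2) with hN2
  set N3 := (∑' k, (gw s f3 k) ^ 2) ^ ((1:ℝ)/2) with hN3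
  set R := ENNReal.ofReal realA ^ ((1:ℝ)/2) with hR
  have hRR : R * R = ENNReal.ofReal realA := by
    rw [hR, ← ENNReal.rpow_add_of_nonneg _ _ (by norm_num) (by norm_num)]
    norm_num
  set D := ENNReal.ofReal realA * (N1 * (N2 * N3)) with hD
  -- inner sum as T k
  set T : ℤ → ℝ≥0∞ := fun k => ∑' p : ℤ × ℤ,
    ENNReal.ofReal (jb (max (max |p.1| |p.2|) |k - p.1 + p.2|) ^ (2 : ℝ)) *
      (f1 p.1 : ℝ≥0∞) * (f2 p.2 : ℝ≥0∞) * (f3 (k - p.1 + p.2) : ℝ≥0∞) with hT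
  -- Step 1 : rewrite LHS
  have step1 : (∑' k : ℤ, ENNReal.ofReal (jb k ^ (2 * (s - 2))) * (T k) ^ 2) ^ ((1:ℝ)/2)
      = (∑' k : ℤ, (ENNReal.ofReal (jb k ^ (s-2)) * T k) ^ 2) ^ ((1:ℝ)/2) := by
    congr 1
    refine tsum_congr fun k => ?_
    rw [mul_pow, ← ENNReal.ofReal_pow (Real.rpow_nonneg (jb_nonneg k) _)]
    congr 2
    rw [← Real.rpow_natCast (jb k ^ (s-2)) 2, ← Real.rpow_mul (jb_nonneg k)]
    norm_num
    congr 1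
    ring
  -- the six pattern functions
  set U1 : ℤ → ℝ≥0∞ := fun k => ∑' p : ℤ × ℤ,
    gw s f1 p.1 * hw s f2 p.2 * hw s f3 (k - p.1 + p.2) with hU1
  set U2 : ℤ → ℝ≥0∞ := fun k => ∑' p : ℤ × ℤ,
    hw s f1 p.1 * gw s f2 p.2 * hw s f3 (k - p.1 + p.2) with hU2
  set U3 : ℤ → ℝ≥0∞ := fun k => ∑' p : ℤ × ℤ,
    hw s f1 p.1 * hw s f2 p.2 * gw s f3 (k - p.1 + p.2) with hU3
  set U4 : ℤ → ℝ≥0∞ := fun k => jbinvE k * ∑' p : ℤ × ℤ,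
    gw s f1 p.1 * gw s f2 p.2 * hw s f3 (k - p.1 + p.2) with hU4
  set U5 : ℤ → ℝ≥0∞ := fun k => jbinvE k * ∑' p : ℤ × ℤ,
    gw s f1 p.1 * hw s f2 p.2 * gw s f3 (k - p.1 + p.2) with hU5
  set U6 : ℤ → ℝ≥0∞ := fun k => jbinvE k * ∑' p : ℤ × ℤ,
    hw s f1 p.1 * gw s f2 p.2 * gw s f3 (k - p.1 + p.2) with hU6
  -- Step 2 : pointwise bound
  have step2 : ∀ k : ℤ, ENNReal.ofReal (jb k ^ (s-2)) * T k
      ≤ ENNReal.ofReal (3 ^ (s-1)) * (U1 k + U2 k + U3 k + U4 k + U5 k + U6 k) := by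
    intro k
    rw [hT]
    calc ENNReal.ofReal (jb k ^ (s-2)) * ∑' p : ℤ × ℤ,
        ENNReal.ofReal (jb (max (max |p.1| |p.2|) |k - p.1 + p.2|) ^ (2 : ℝ)) *
          (f1 p.1 : ℝ≥0∞) * (f2 p.2 : ℝ≥0∞) * (f3 (k - p.1 + p.2) : ℝ≥0∞)
        = ∑' p : ℤ × ℤ, ENNReal.ofReal (jb k ^ (s-2)) *
            (ENNReal.ofReal (jb (max (max |p.1| |p.2|) |k - p.1 + p.2|) ^ (2 : ℝ)) *
              (f1 p.1 : ℝ≥0∞) * (f2 p.2 : ℝ≥0∞) * (f3 (k - p.1 + p.2) : ℝ≥0∞)) :=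
          ENNReal.tsum_mul_left.symm
      _ ≤ ∑' p : ℤ × ℤ, ENNReal.ofReal (3 ^ (s-1)) *
            (gw s f1 p.1 * hw s f2 p.2 * hw s f3 (k - p.1 + p.2)
             + hw s f1 p.1 * gw s f2 p.2 * hw s f3 (k - p.1 + p.2)
             + hw s f1 p.1 * hw s f2 p.2 * gw s f3 (k - p.1 + p.2)
             + jbinvE k * (gw s f1 p.1 * gw s f2 p.2 * hw s f3 (k - p.1 + p.2))
             + jbinvE k * (gw s f1 p.1 * hw s f2 p.2 * gw s f3 (k - p.1 + p.2))
             + jbinvE k * (hw s f1 p.1 * gw s f2 p.2 * gw s f3 (k - p.1 + p.2))) :=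
          ENNReal.tsum_le_tsum fun p => pt s hs f1 f2 f3 k p.1 p.2
      _ = ENNReal.ofReal (3 ^ (s-1)) * (U1 k + U2 k + U3 k + U4 k + U5 k + U6 k) := by
          rw [ENNReal.tsum_mul_left]
          congr 1
          rw [hU1, hU2, hU3, hU4, hU5, hU6]
          simp only
          rw [ENNReal.tsum_add, ENNReal.tsum_add, ENNReal.tsum_add, ENNReal.tsum_add,
            ENNReal.tsum_add, ENNReal.tsum_mul_left, ENNReal.tsum_mul_left,
            ENNReal.tsum_mul_left]
  -- Step 4: bounds for each pattern
  have b1 : (∑' k, (U1 k) ^ 2) ^ ((1:ℝ)/2) ≤ D := by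
    calc (∑' k, (U1 k) ^ 2) ^ ((1:ℝ)/2)
        ≤ (∑' i, hw s f2 i) * (∑' j, hw s f3 j) * N1 :=
          patA1 (gw s f1) (hw s f2) (hw s f3)
      _ ≤ (R * N2) * (R * N3) * N1 := by
          gcongr
          · exact hw_l1 s f2
          · exact hw_l1 s f3
      _ = (R * R) * (N1 * (N2 * N3)) := by ring
      _ = D := by rw [hRR, hD]
  have b2 : (∑' k, (U2 k) ^ 2) ^ ((1:ℝ)/2) ≤ D := by
    calc (∑' k, (U2 k) ^ 2) ^ ((1:ℝ)/2)
        ≤ (∑' i, hw s f1 i) * (∑' j, hw s f3 j) * N2 :=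
          patA2 (hw s f1) (gw s f2) (hw s f3)
      _ ≤ (R * N1) * (R * N3) * N2 := by
          gcongr
          · exact hw_l1 s f1
          · exact hw_l1 s f3
      _ = (R * R) * (N1 * (N2 * N3)) := by ring
      _ = D := by rw [hRR, hD]
  have b3 : (∑' k, (U3 k) ^ 2) ^ ((1:ℝ)/2) ≤ D := by
    calc (∑' k, (U3 k) ^ 2) ^ ((1:ℝ)/2)
        ≤ (∑' i, hw s f1 i) * (∑' j, hw s f2 j) * N3 :=
          patA3 (hw s f1) (hw s f2) (gw s f3)
      _ ≤ (R * N1) * (R * N2) * N3 := by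
          gcongr
          · exact hw_l1 s f1
          · exact hw_l1 s f2
      _ = (R * R) * (N1 * (N2 * N3)) := by ring
      _ = D := by rw [hRR, hD]
  have b4 : (∑' k, (U4 k) ^ 2) ^ ((1:ℝ)/2) ≤ D := by
    have hptw : ∀ k, U4 k ≤ jbinvE k * ((∑' i, hw s f3 i) * (N1 * N2)) := by
      intro k
      rw [hU4]
      simp only
      exact mul_le_mul' le_rfl (patB3 (gw s f1) (gw s f2) (hw s f3) k)
    calc (∑' k, (U4 k) ^ 2) ^ ((1:ℝ)/2)
        ≤ (∑' k, (jbinvE k * ((∑' i, hw s f3 i) * (N1 * N2))) ^ 2) ^ ((1:ℝ)/2) := by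
          refine l2mono hptw
      _ = (∑' k, (jbinvE k) ^ 2) ^ ((1:ℝ)/2) * ((∑' i, hw s f3 i) * (N1 * N2)) :=
          l2scale_right _ _
      _ = R * ((∑' i, hw s f3 i) * (N1 * N2)) := by rw [A_fin, hR]
      _ ≤ R * ((R * N3) * (N1 * N2)) := by
          gcongr
          exact hw_l1 s f3
      _ = (R * R) * (N1 * (N2 * N3)) := by ring
      _ = D := by rw [hRR, hD]
  have b5 : (∑' k, (U5 k) ^ 2) ^ ((1:ℝ)/2) ≤ D := by
    have hptw : ∀ k, U5 k ≤ jbinvE k * ((∑' i, hw s f2 i) * (N1 * N3)) := by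
      intro k
      rw [hU5]
      simp only
      exact mul_le_mul' le_rfl (patB2 (gw s f1) (hw s f2) (gw s f3) k)
    calc (∑' k, (U5 k) ^ 2) ^ ((1:ℝ)/2)
        ≤ (∑' k, (jbinvE k * ((∑' i, hw s f2 i) * (N1 * N3))) ^ 2) ^ ((1:ℝ)/2) := l2mono hptw
      _ = (∑' k, (jbinvE k) ^ 2) ^ ((1:ℝ)/2) * ((∑' i, hw s f2 i) * (N1 * N3)) :=
          l2scale_right _ _
      _ = R * ((∑' i, hw s f2 i) * (N1 * N3)) := by rw [A_fin, hR]
      _ ≤ R * ((R * N2) * (N1 * N3)) := by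
          gcongr
          exact hw_l1 s f2
      _ = (R * R) * (N1 * (N2 * N3)) := by ring
      _ = D := by rw [hRR, hD]
  have b6 : (∑' k, (U6 k) ^ 2) ^ ((1:ℝ)/2) ≤ D := by
    have hptw : ∀ k, U6 k ≤ jbinvE k * ((∑' i, hw s f1 i) * (N2 * N3)) := by
      intro k
      rw [hU6]
      simp only
      exact mul_le_mul' le_rfl (patB1 (hw s f1) (gw s f2) (gw s f3) k)
    calc (∑' k, (U6 k) ^ 2) ^ ((1:ℝ)/2)
        ≤ (∑' k, (jbinvE k * ((∑' i, hw s f1 i) * (N2 * N3))) ^ 2) ^ ((1:ℝ)/2) := l2mono hptw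
      _ = (∑' k, (jbinvE k) ^ 2) ^ ((1:ℝ)/2) * ((∑' i, hw s f1 i) * (N2 * N3)) :=
          l2scale_right _ _
      _ = R * ((∑' i, hw s f1 i) * (N2 * N3)) := by rw [A_fin, hR]
      _ ≤ R * ((R * N1) * (N2 * N3)) := by
          gcongr
          exact hw_l1 s f1
      _ = (R * R) * (N1 * (N2 * N3)) := by ring
      _ = D := by rw [hRR, hD]
  -- final assembly
  calc (∑' k : ℤ, ENNReal.ofReal (jb k ^ (2 * (s - 2))) * (T k) ^ 2) ^ ((1:ℝ)/2)
      = (∑' k : ℤ, (ENNReal.ofReal (jb k ^ (s-2)) * T k) ^ 2) ^ ((1:ℝ)/2) := step1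
    _ ≤ (∑' k : ℤ, (ENNReal.ofReal (3 ^ (s-1)) *
          (U1 k + U2 k + U3 k + U4 k + U5 k + U6 k)) ^ 2) ^ ((1:ℝ)/2) := l2mono step2
    _ = ENNReal.ofReal (3 ^ (s-1)) *
          (∑' k : ℤ, (U1 k + U2 k + U3 k + U4 k + U5 k + U6 k) ^ 2) ^ ((1:ℝ)/2) :=
        l2scale _ _
    _ ≤ ENNReal.ofReal (3 ^ (s-1)) * (D + D + D + D + D + D) := by
        refine mul_le_mul' le_rfl ?_
        refine le_trans (mink6 U1 U2 U3 U4 U5 U6) ?_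
        gcongr
    _ = ENNReal.ofReal (3 ^ (s-1) * 6 * realA) * (N1 * (N2 * N3)) := by
        rw [hD]
        rw [ENNReal.ofReal_mul (by positivity : (0:ℝ) ≤ (3:ℝ) ^ (s-1) * 6),
          ENNReal.ofReal_mul (by positivity : (0:ℝ) ≤ (3:ℝ) ^ (s-1))]
        rw [show ENNReal.ofReal (6:ℝ) = (6:ℝ≥0∞) by
          rw [show (6:ℝ) = ((6:ℕ):ℝ) by norm_num, ENNReal.ofReal_natCast]; norm_num]
        ring
    _ = ENNReal.ofReal (3 ^ (s-1) * 6 * realA) * (sobNorm s f1 * (sobNorm s f2 * sobNorm s f3)) := by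
        rw [sob_eq s f1, sob_eq s f2, sob_eq s f3]
    _ = ENNReal.ofReal (3 ^ (s-1) * 6 * realA) * (sobNorm s f1 * sobNorm s f2 * sobNorm s f3) := by
        ring
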